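/- For every natural number m ≥ 1, the integer identity 2·∑_{s=1}^{m} (−1)^{m+s}·s·C(2m+1, m−s) = (−1)^{m+1}·C(2m, m) holds. -/

import Mathlib

/-- Partial alternating sum of binomial coefficients:
∑_{k=0}^{n} (−1)^k C(N+1,k) = (−1)^n C(N,n). -/
lemma stmt_9_alt_sum (N : ℕ) : ∀ n : ℕ,
    ∑ k ∈ Finset.range (n + 1), (-1 : ℤ) ^ k * ((N + 1).choose k) =
      (-1) ^ n * (N.choose n) := by
  intro n
  induction n with
  | zero => simp
  | succ n ih =>
      rw [Finset.sum_range_succ, ih, Nat.choose_succ_succ]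
      push_cast
      ring

/-- Ω₀ computation: 2·∑_{s=1}^{m} (−1)^{m+s}·s·C(2m+1, m−s) = (−1)^{m+1}·C(2m, m). -/
theorem stmt_9 (m : ℕ) (hm : 1 ≤ m) :
    (2 : ℤ) * ∑ s ∈ Finset.Icc 1 m,
        (-1) ^ (m + s) * (s : ℤ) * ((2 * m + 1).choose (m - s)) =
      (-1) ^ (m + 1) * ((2 * m).choose m) := by
  rcases m with _ | _ | n
  · omega
  · -- m = 1
    norm_num
  · -- m = n + 2
    set m := n + 2 with hmdef
    -- reindex: k = m - s
    have h1 : ∑ s ∈ Finset.Icc 1 m,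
        (-1 : ℤ) ^ (m + s) * (s : ℤ) * ((2 * m + 1).choose (m - s)) =
        ∑ k ∈ Finset.range m,
          (-1 : ℤ) ^ k * ((m - k : ℕ) : ℤ) * ((2 * m + 1).choose k) := by
      apply Finset.sum_nbij' (fun s => m - s) (fun k => m - k)
      · intro a ha
        simp only [Finset.mem_Icc] at ha
        simp only [Finset.mem_range]
        omega
      · intro a ha
        simp only [Finset.mem_range] at ha
        simp only [Finset.mem_Icc]
        omega
      · intro a ha
        simp only [Finset.mem_Icc] at ha
        omega
      · intro a ha
        simp only [Finset.mem_range] at ha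
        omega
      · intro s hs
        simp only [Finset.mem_Icc] at hs
        have h2 : m - (m - s) = s := by omega
        have h3 : m + s = (m - s) + 2 * s := by omega
        rw [h2, h3, pow_add, pow_mul]
        norm_num
    rw [h1]
    -- split the sum
    have h2 : ∑ k ∈ Finset.range m,
        (-1 : ℤ) ^ k * ((m - k : ℕ) : ℤ) * ((2 * m + 1).choose k) =
        (m : ℤ) * ∑ k ∈ Finset.range m, (-1 : ℤ) ^ k * ((2 * m + 1).choose k)
          - ∑ k ∈ Finset.range m, (-1 : ℤ) ^ k * (k : ℤ) * ((2 * m + 1).choose k) := by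
      rw [Finset.mul_sum, ← Finset.sum_sub_distrib]
      apply Finset.sum_congr rfl
      intro k hk
      have hk' : k ≤ m := le_of_lt (Finset.mem_range.mp hk)
      rw [Nat.cast_sub hk']
      ring
    rw [h2]
    -- compute sum A using alt_sum
    have hA : ∑ k ∈ Finset.range m, (-1 : ℤ) ^ k * ((2 * m + 1).choose k) =
        (-1 : ℤ) ^ (n + 1) * ((2 * n + 4).choose (n + 1)) := by
      have := stmt_9_alt_sum (2 * n + 4) (n + 1)
      have e1 : 2 * m + 1 = 2 * n + 4 + 1 := by omega
      rw [e1]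
      exact this
    -- compute sum B
    have hB : ∑ k ∈ Finset.range m, (-1 : ℤ) ^ k * (k : ℤ) * ((2 * m + 1).choose k) =
        -(2 * (n : ℤ) + 5) * ((-1 : ℤ) ^ n * ((2 * n + 3).choose n)) := by
      have e1 : 2 * m + 1 = 2 * n + 5 := by omega
      rw [e1]
      rw [show m = (n + 1) + 1 from rfl, Finset.sum_range_succ' _ (n + 1)]
      simp only [Nat.cast_zero, mul_zero, zero_mul, add_zero]
      have hstep : ∀ j ∈ Finset.range (n + 1),
          (-1 : ℤ) ^ (j + 1) * ((j : ℤ) + 1) * ((2 * n + 5).choose (j + 1)) =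
          -(2 * (n : ℤ) + 5) * ((-1 : ℤ) ^ j * ((2 * n + 4).choose j)) := by
        intro j hj
        have hc := Nat.add_one_mul_choose_eq (2 * n + 4) j
        have hcz : (2 * (n : ℤ) + 5) * ((2 * n + 4).choose j) =
            ((2 * n + 5).choose (j + 1)) * ((j : ℤ) + 1) := by
          exact_mod_cast hc
        rw [pow_succ]
        linear_combination ((-1 : ℤ) ^ j) * hcz
      calc ∑ j ∈ Finset.range (n + 1),
            (-1 : ℤ) ^ (j + 1) * (((j : ℕ) + 1 : ℕ) : ℤ) * ((2 * n + 5).choose (j + 1))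
          = ∑ j ∈ Finset.range (n + 1),
            -(2 * (n : ℤ) + 5) * ((-1 : ℤ) ^ j * ((2 * n + 4).choose j)) := by
            apply Finset.sum_congr rfl
            intro j hj
            push_cast
            exact hstep j hj
        _ = -(2 * (n : ℤ) + 5) * ∑ j ∈ Finset.range (n + 1),
              (-1 : ℤ) ^ j * ((2 * n + 4).choose j) := by rw [Finset.mul_sum]
        _ = -(2 * (n : ℤ) + 5) * ((-1 : ℤ) ^ n * ((2 * n + 3).choose n)) := by
              rw [stmt_9_alt_sum (2 * n + 3) n]
    rw [hA, hB]
    -- now pure binomial algebra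
    set x := (2 * n + 3).choose (n + 1) with hxdef
    set y := (2 * n + 3).choose n with hydef
    have hX : (2 * n + 4).choose (n + 1) = y + x := by
      rw [show 2 * n + 4 = (2 * n + 3) + 1 from rfl]
      exact Nat.choose_succ_succ (2 * n + 3) n
    have hsym : (2 * n + 3).choose (n + 2) = x := by
      rw [hxdef, ← Nat.choose_symm (show n + 2 ≤ 2 * n + 3 by omega)]
      congr 1
      omega
    have hC : (2 * m).choose m = 2 * x := by
      rw [show 2 * m = (2 * n + 3) + 1 from rfl, show m = (n + 1) + 1 from rfl,
        Nat.choose_succ_succ, hsym, hxdef]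
      omega
    have hr : (n + 1) * x = (n + 3) * y := by
      have := Nat.choose_succ_right_eq (2 * n + 3) n
      rw [show 2 * n + 3 - n = n + 3 by omega] at this
      rw [hxdef, hydef]
      linarith [this]
    rw [hX, hC]
    have hrz : ((n : ℤ) + 1) * x = ((n : ℤ) + 3) * y := by exact_mod_cast hr
    push_cast
    rw [show m = (n + 1) + 1 from rfl]
    push_cast
    linear_combination (-2 * (-1 : ℤ) ^ n) * hrz
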